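/- Under the same hypotheses (D bounded, G nonnegative, R uniformly positive, all bounded self-adjoint where appropriate), the kernel of the adjoint A* of A = [[-G, -D*], [D, -R]] equals the kernel of A, and both equal (ker G ∩ ker D) × {0}. -/

import Mathlib

open ContinuousLinearMap

local notation "⟪" x ", " y "⟫" => @inner ℂ _ _ x y

/-- `ker A* = ker A = (ker G ∩ ker D) × {0}` for `A = [[-G,-D*],[D,-R]]` with `G ≥ 0`
and `R` uniformly positive. The Hilbert space `X × X` is modeled as `WithLp 2 (X × X)`. -/
theorem stmt5 {X : Type*} [NormedAddCommGroup X] [InnerProductSpace ℂ X] [CompleteSpace X]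
    (D G R : X →L[ℂ] X) (hG : IsSelfAdjoint G) (hR : IsSelfAdjoint R)
    (hGpos : ∀ x : X, 0 ≤ (⟪G x, x⟫).re)
    (r₀ : ℝ) (hr₀ : 0 < r₀)
    (hRpos : ∀ x : X, r₀ * ‖x‖ ^ 2 ≤ (⟪R x, x⟫).re)
    (A : WithLp 2 (X × X) →L[ℂ] WithLp 2 (X × X))
    (hA : ∀ x₁ x₂ : X, A ((WithLp.equiv 2 (X × X)).symm (x₁, x₂)) =
      (WithLp.equiv 2 (X × X)).symm
        (-(G x₁) - (ContinuousLinearMap.adjoint D) x₂, D x₁ - R x₂)) :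
    LinearMap.ker
        (ContinuousLinearMap.adjoint A : WithLp 2 (X × X) →ₗ[ℂ] WithLp 2 (X × X)) =
      LinearMap.ker (A : WithLp 2 (X × X) →ₗ[ℂ] WithLp 2 (X × X)) ∧
    ∀ z : WithLp 2 (X × X), z ∈ LinearMap.ker (A : WithLp 2 (X × X) →ₗ[ℂ] WithLp 2 (X × X)) ↔
      (G (WithLp.equiv 2 (X × X) z).1 = 0 ∧ D (WithLp.equiv 2 (X × X) z).1 = 0 ∧
        (WithLp.equiv 2 (X × X) z).2 = 0) := by
  set e := WithLp.equiv 2 (X × X) with he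
  have hfst : ∀ p : X × X, (e.symm p).ofLp.1 = p.1 := fun _ => rfl
  have hsnd : ∀ p : X × X, (e.symm p).ofLp.2 = p.2 := fun _ => rfl
  have hzero : e.symm (0, 0) = 0 := rfl
  have hfst' : ∀ v : WithLp 2 (X × X), (e v).1 = v.ofLp.1 := fun _ => rfl
  have hsnd' : ∀ v : WithLp 2 (X × X), (e v).2 = v.ofLp.2 := fun _ => rfl
  have hRsym : ∀ a b : X, ⟪a, R b⟫ = ⟪R a, b⟫ := fun a b => by
    rw [← adjoint_inner_left, hR.adjoint_eq]
  have hGsym : ∀ a b : X, ⟪a, G b⟫ = ⟪G a, b⟫ := fun a b => by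
    rw [← adjoint_inner_left, hG.adjoint_eq]
  have hA' : ∀ z : WithLp 2 (X × X),
      A z = e.symm (-(G (e z).1) - adjoint D (e z).2, D (e z).1 - R (e z).2) := by
    intro z
    have h := hA (e z).1 (e z).2
    simpa using h
  -- positivity argument
  have key : ∀ (x₁ x₂ : X), (⟪G x₁, x₁⟫).re + (⟪R x₂, x₂⟫).re = 0 → x₂ = 0 := by
    intro x₁ x₂ h
    have h1 := hGpos x₁
    have h2 := hRpos x₂
    have h3 : ‖x₂‖ ^ 2 ≤ 0 := by nlinarith
    have h4 : ‖x₂‖ = 0 := by nlinarith [norm_nonneg x₂, sq_nonneg ‖x₂‖]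
    exact norm_eq_zero.mp h4
  -- formula for the adjoint
  have hAadj : ∀ z : WithLp 2 (X × X),
      adjoint A z = e.symm (-(G (e z).1) + adjoint D (e z).2, -(D (e z).1) - R (e z).2) := by
    intro z
    apply ext_inner_right ℂ
    intro w
    rw [adjoint_inner_left, hA' w]
    simp only [WithLp.prod_inner_apply, hfst, hsnd, hfst', hsnd',
      inner_sub_left, inner_sub_right, inner_neg_left, inner_neg_right, inner_add_left,
      adjoint_inner_left, adjoint_inner_right, hGsym, hRsym]
    ring
  -- kernel characterization for A
  have kerA : ∀ z : WithLp 2 (X × X),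
      A z = 0 ↔ (G (e z).1 = 0 ∧ D (e z).1 = 0 ∧ (e z).2 = 0) := by
    intro z
    constructor
    · intro hz
      have hzz := hA' z
      rw [hz] at hzz
      have hp : WithLp.ofLp (0 : WithLp 2 (X × X))
          = (-(G (e z).1) - adjoint D (e z).2, D (e z).1 - R (e z).2) := by
        have := congrArg e hzz
        simp at this
        exact this
      have eq1 : -(G (e z).1) - adjoint D (e z).2 = 0 := by
        have := congrArg Prod.fst hp
        simpa using this.symm
      have eq2 : D (e z).1 - R (e z).2 = 0 := by
        have := congrArg Prod.snd hp
        simpa using this.symm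
      rw [sub_eq_zero] at eq1 eq2
      have e1 : G (e z).1 = -(adjoint D (e z).2) := neg_eq_iff_eq_neg.mp eq1
      have hre : (⟪G (e z).1, (e z).1⟫).re + (⟪R (e z).2, (e z).2⟫).re = 0 := by
        have hsum : ⟪G (e z).1, (e z).1⟫ + ⟪R (e z).2, (e z).2⟫
            = -⟪(e z).2, D (e z).1⟫ + (starRingEnd ℂ) ⟪(e z).2, D (e z).1⟫ := by
          rw [e1, ← eq2, inner_neg_left, adjoint_inner_left, inner_conj_symm]
        have h5 := congrArg Complex.re hsum
        simp only [Complex.add_re, Complex.neg_re, Complex.conj_re] at h5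
        linarith
      have hx2 : (e z).2 = 0 := key _ _ hre
      have hD : D (e z).1 = 0 := by rw [eq2, hx2, map_zero]
      have hG0 : G (e z).1 = 0 := by rw [e1, hx2, map_zero, neg_zero]
      exact ⟨hG0, hD, hx2⟩
    · rintro ⟨h1, h2, h3⟩
      rw [hA', h1, h2, h3]
      simp only [neg_zero, map_zero, zero_sub, sub_zero, neg_zero, zero_add]
      simpa using hzero
  -- kernel characterization for the adjoint
  have kerAadj : ∀ z : WithLp 2 (X × X),
      adjoint A z = 0 ↔ (G (e z).1 = 0 ∧ D (e z).1 = 0 ∧ (e z).2 = 0) := by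
    intro z
    constructor
    · intro hz
      have hzz := hAadj z
      rw [hz] at hzz
      have hp : WithLp.ofLp (0 : WithLp 2 (X × X))
          = (-(G (e z).1) + adjoint D (e z).2, -(D (e z).1) - R (e z).2) := by
        have := congrArg e hzz
        simp at this
        exact this
      have eq1 : -(G (e z).1) + adjoint D (e z).2 = 0 := by
        have := congrArg Prod.fst hp
        simpa using this.symm
      have eq2 : -(D (e z).1) - R (e z).2 = 0 := by
        have := congrArg Prod.snd hp
        simpa using this.symm
      rw [neg_add_eq_zero] at eq1
      rw [sub_eq_zero] at eq2
      have hre : (⟪G (e z).1, (e z).1⟫).re + (⟪R (e z).2, (e z).2⟫).re = 0 := by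
        have hsum : ⟪G (e z).1, (e z).1⟫ + ⟪R (e z).2, (e z).2⟫
            = (starRingEnd ℂ) ⟪(e z).1, adjoint D (e z).2⟫ + -⟪(e z).1, adjoint D (e z).2⟫ := by
          rw [eq1, ← eq2, inner_neg_left, inner_conj_symm]
          rw [adjoint_inner_right, adjoint_inner_left]
        have h5 := congrArg Complex.re hsum
        simp only [Complex.add_re, Complex.neg_re, Complex.conj_re] at h5
        linarith
      have hx2 : (e z).2 = 0 := key _ _ hre
      have hD : D (e z).1 = 0 := by
        have := eq2
        rw [hx2, map_zero] at this
        simpa using this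
      have hG0 : G (e z).1 = 0 := by rw [eq1, hx2, map_zero]
      exact ⟨hG0, hD, hx2⟩
    · rintro ⟨h1, h2, h3⟩
      rw [hAadj, h1, h2, h3]
      simp only [neg_zero, map_zero, zero_sub, sub_zero, neg_zero, zero_add, add_zero]
      simpa using hzero
  constructor
  · ext z
    simp only [LinearMap.mem_ker, ContinuousLinearMap.coe_coe]
    rw [kerA z, kerAadj z]
  · intro z
    simp only [LinearMap.mem_ker, ContinuousLinearMap.coe_coe]
    exact kerA z
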